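/- The function t ↦ log(Φ(−t)) + t²/2 is strictly decreasing on ℝ, where Φ(x) = ∫_{−∞}^x (2π)^{−1/2} e^{−u²/2} du is the standard normal cumulative distribution function. -/
import Mathlib


open Real MeasureTheory

lemma aux_integrable (t : ℝ) :
    IntegrableOn (fun v : ℝ => (2 * π) ^ (-(1 : ℝ) / 2) * Real.exp (-t * v - v ^ 2 / 2))
      (Set.Ioi 0) := by
  have h1 : Integrable (fun v : ℝ => Real.exp (-(1/2 : ℝ) * v ^ 2)) :=
    integrable_exp_neg_mul_sq (by norm_num)
  have h2 : Integrable (fun v : ℝ => Real.exp (-(1/2 : ℝ) * (v + t) ^ 2)) :=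
    h1.comp_add_right t
  have h3 : Integrable (fun v : ℝ =>
      (2 * π) ^ (-(1 : ℝ) / 2) * Real.exp (t ^ 2 / 2) * Real.exp (-(1/2 : ℝ) * (v + t) ^ 2)) :=
    h2.const_mul _
  have : (fun v : ℝ => (2 * π) ^ (-(1 : ℝ) / 2) * Real.exp (-t * v - v ^ 2 / 2)) =
      fun v : ℝ =>
      (2 * π) ^ (-(1 : ℝ) / 2) * Real.exp (t ^ 2 / 2) * Real.exp (-(1/2 : ℝ) * (v + t) ^ 2) := by
    funext v
    rw [mul_assoc, ← Real.exp_add]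
    ring_nf
  rw [this]
  exact h3.integrableOn

lemma aux_repr (t : ℝ)
    (Φ : ℝ → ℝ)
    (hΦ : ∀ x, Φ x = ∫ u in Set.Iic x, (2 * π) ^ (-(1 : ℝ) / 2) * Real.exp (-u ^ 2 / 2)) :
    Real.exp (t ^ 2 / 2) * Φ (-t)
      = ∫ v in Set.Ioi (0 : ℝ), (2 * π) ^ (-(1 : ℝ) / 2) * Real.exp (-t * v - v ^ 2 / 2) := by
  set c : ℝ := (2 * π) ^ (-(1 : ℝ) / 2)
  have hrefl : Φ (-t) = ∫ u in Set.Ici t, c * Real.exp (-u ^ 2 / 2) := by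
    rw [hΦ]
    have := (Measure.measurePreserving_neg (volume : Measure ℝ)).setIntegral_preimage_emb
      (MeasurableEquiv.neg ℝ).measurableEmbedding
      (fun u => c * Real.exp (-u ^ 2 / 2)) (Set.Iic (-t))
    have hpre : (Neg.neg ⁻¹' Set.Iic (-t) : Set ℝ) = Set.Ici t := by
      ext x; simp
    rw [hpre] at this
    rw [← this]
    congr 1
    funext u
    ring_nf
  have hshift : (∫ u in Set.Ici t, c * Real.exp (-u ^ 2 / 2))
      = ∫ v in Set.Ioi (0 : ℝ), c * Real.exp (-(v + t) ^ 2 / 2) := by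
    rw [integral_Ici_eq_integral_Ioi]
    have := (measurePreserving_add_right (volume : Measure ℝ) t).setIntegral_preimage_emb
      (MeasurableEquiv.addRight t).measurableEmbedding
      (fun u => c * Real.exp (-u ^ 2 / 2)) (Set.Ioi t)
    have hpre : ((· + t) ⁻¹' Set.Ioi t : Set ℝ) = Set.Ioi 0 := by
      ext x; simp
    rw [hpre] at this
    exact this.symm
  rw [hrefl, hshift, ← integral_const_mul]
  congr 1
  funext v
  rw [show Real.exp (t ^ 2 / 2) * (c * Real.exp (-(v + t) ^ 2 / 2))
      = c * (Real.exp (t ^ 2 / 2) * Real.exp (-(v + t) ^ 2 / 2)) by ring, ← Real.exp_add]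
  ring_nf

/-- The function `t ↦ log(Φ(−t)) + t²/2` is strictly decreasing on `ℝ`, where `Φ` is
the standard normal cumulative distribution function. -/
theorem log_gauss_cdf_add_sq_strictAnti
    (Φ : ℝ → ℝ)
    (hΦ : ∀ x, Φ x = ∫ u in Set.Iic x, (2 * π) ^ (-(1 : ℝ) / 2) * Real.exp (-u ^ 2 / 2)) :
    StrictAnti (fun t : ℝ => Real.log (Φ (-t)) + t ^ 2 / 2) := by
  set c : ℝ := (2 * π) ^ (-(1 : ℝ) / 2) with hc
  have hcpos : 0 < c := Real.rpow_pos_of_pos (by positivity) _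
  set F : ℝ → ℝ := fun t => Real.exp (t ^ 2 / 2) * Φ (-t) with hF
  -- F is positive
  have hFpos : ∀ t, 0 < F t := by
    intro t
    have hFt : F t = Real.exp (t ^ 2 / 2) * Φ (-t) := rfl
    rw [hFt, aux_repr t Φ hΦ]
    apply setIntegral_pos_iff_support_of_nonneg_ae ?_ (aux_integrable t) |>.mpr
    · have : (Function.support fun v : ℝ => c * Real.exp (-t * v - v ^ 2 / 2)) = Set.univ := by
        ext x
        simp only [Function.mem_support, Set.mem_univ, iff_true]
        positivity
      rw [this]
      simp [Real.volume_Ioi]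
    · filter_upwards with v
      positivity
  -- F is strictly decreasing
  have hFanti : StrictAnti F := by
    intro s t hst
    rw [hF]
    simp only
    rw [aux_repr s Φ hΦ, aux_repr t Φ hΦ]
    have hdiff : (∫ v in Set.Ioi (0 : ℝ),
        (c * Real.exp (-s * v - v ^ 2 / 2) - c * Real.exp (-t * v - v ^ 2 / 2))) > 0 := by
      apply (setIntegral_pos_iff_support_of_nonneg_ae ?_ ((aux_integrable s).sub (aux_integrable t))).mpr
      · have hsupp : Set.Ioi (0:ℝ) ⊆ (Function.support fun v : ℝ =>
            c * Real.exp (-s * v - v ^ 2 / 2) - c * Real.exp (-t * v - v ^ 2 / 2))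
            ∩ Set.Ioi 0 := by
          intro v hv
          refine ⟨?_, hv⟩
          simp only [Function.mem_support]
          have : Real.exp (-t * v - v ^ 2 / 2) < Real.exp (-s * v - v ^ 2 / 2) := by
            apply Real.exp_lt_exp.mpr
            have : t * v > s * v := by
              exact (mul_lt_mul_of_pos_right hst hv)
            linarith
          have := mul_lt_mul_of_pos_left this hcpos
          intro h
          linarith
        calc (0 : ENNReal) < volume (Set.Ioi (0:ℝ)) := by simp [Real.volume_Ioi]
          _ ≤ _ := measure_mono hsupp
      · rw [Filter.EventuallyLE, ae_restrict_iff' measurableSet_Ioi]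
        filter_upwards with v hv
        have : Real.exp (-t * v - v ^ 2 / 2) ≤ Real.exp (-s * v - v ^ 2 / 2) := by
          apply Real.exp_le_exp.mpr
          nlinarith [Set.mem_Ioi.mp hv]
        simp only [Pi.sub_apply, Pi.zero_apply, sub_nonneg]
        exact mul_le_mul_of_nonneg_left this hcpos.le
    rw [integral_sub (aux_integrable s) (aux_integrable t)] at hdiff
    linarith
  -- conclude
  intro s t hst
  have h1 : F t < F s := hFanti hst
  have hlog : ∀ u : ℝ, Real.log (Φ (-u)) + u ^ 2 / 2 = Real.log (F u) := by
    intro u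
    rw [hF]
    have hΦpos : 0 < Φ (-u) := by
      have := hFpos u
      rw [hF] at this
      by_contra h
      push_neg at h
      nlinarith [Real.exp_pos (u ^ 2 / 2)]
    rw [Real.log_mul (Real.exp_ne_zero _) hΦpos.ne', Real.log_exp]
    ring
  simp only [hlog]
  exact Real.log_lt_log (hFpos t) h1
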